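/- G_{a,b}(c) = H(a,b,c); that is, the smallest numerical semigroup containing c and closed under x ↦ ax+b on nonzero elements equals the additive submonoid generated by { a^k·c + b·s_k(a) : k ∈ ℕ }. -/

import Mathlib

/-- `sF a k = Σ_{i=0}^{k-1} a^i` (so `sF a 0 = 0`). -/
def sF (a k : ℕ) : ℕ := ∑ i ∈ Finset.range k, a ^ i

/-- `tF a b c k = a^k * c + b * sF a k`. -/
def tF (a b c k : ℕ) : ℕ := a ^ k * c + b * sF a k

/-- A θ_{a,b}-semigroup: contains 0, closed under addition, and closed under
`x ↦ a*x + b` on nonzero elements. -/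
def IsThetaSG (a b : ℕ) (S : Set ℕ) : Prop :=
  0 ∈ S ∧ (∀ x ∈ S, ∀ y ∈ S, x + y ∈ S) ∧ ∀ y ∈ S, y ≠ 0 → a * y + b ∈ S

/-- `Gset a b c` : the smallest θ_{a,b}-semigroup containing `c`. -/
def Gset (a b c : ℕ) : Set ℕ := ⋂₀ {S : Set ℕ | IsThetaSG a b S ∧ c ∈ S}

/-- `Hmon a b c` : additive submonoid generated by the `tF a b c k`. -/
def Hmon (a b c : ℕ) : AddSubmonoid ℕ :=
  AddSubmonoid.closure {x | ∃ k, x = tF a b c k}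

/-- `{j_i}_{i=1}^k` is `a`-reduced. -/
def AReduced (a k : ℕ) (j : ℕ → ℕ) : Prop :=
  (∀ i, 1 ≤ i → i ≤ k → j i ≤ a) ∧ j k ≠ 0 ∧
  ∀ m, 1 ≤ m → m ≤ k → j m = a → ∀ i, 1 ≤ i → i < m → j i = 0

lemma tF_zero (a b c : ℕ) : tF a b c 0 = c := by
  simp [tF, sF]

lemma tF_succ (a b c k : ℕ) : tF a b c (k + 1) = a * tF a b c k + b := by
  have h : sF a (k + 1) = a * sF a k + 1 := geom_sum_succ
  unfold tF
  rw [h]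
  ring

lemma tF_pos (a b c : ℕ) (ha : 0 < a) (hc : 2 ≤ c) (k : ℕ) : 0 < tF a b c k :=
  Nat.add_pos_left (Nat.mul_pos (pow_pos ha k) (by omega)) _

lemma hmon_split (a b c : ℕ) :
    ∀ y ∈ Hmon a b c, y = 0 ∨ ∃ k z, z ∈ Hmon a b c ∧ y = tF a b c k + z := by
  intro y hy
  induction hy using AddSubmonoid.closure_induction with
  | mem x hx =>
    obtain ⟨k, rfl⟩ := hx
    exact Or.inr ⟨k, 0, zero_mem _, (add_zero _).symm⟩
  | zero => exact Or.inl rfl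
  | add x y hx hy ihx ihy =>
    rcases ihx with rfl | ⟨k, z, hz, rfl⟩
    · rcases ihy with rfl | ⟨k, z, hz, rfl⟩
      · exact Or.inl rfl
      · exact Or.inr ⟨k, z, hz, zero_add _⟩
    · exact Or.inr ⟨k, z + y, add_mem hz hy, by ring⟩

theorem stmt6 (a b c : ℕ) (ha : 0 < a) (hb : 0 < b) (hc : 2 ≤ c)
    (hcop : Nat.gcd b c = 1) :
    Gset a b c = (Hmon a b c : Set ℕ) := by
  apply Set.Subset.antisymm
  · intro x hx
    refine hx _ ⟨⟨zero_mem _, fun x hx y hy => add_mem hx hy, ?_⟩,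
      AddSubmonoid.subset_closure ⟨0, (tF_zero a b c).symm⟩⟩
    intro y hy hy0
    rcases hmon_split a b c y hy with rfl | ⟨k, z, hz, rfl⟩
    · exact absurd rfl hy0
    · have h1 : tF a b c (k + 1) ∈ Hmon a b c := AddSubmonoid.subset_closure ⟨k + 1, rfl⟩
      have h2 : a * z ∈ Hmon a b c := by
        simpa [smul_eq_mul] using (Hmon a b c).nsmul_mem hz a
      have heq : a * (tF a b c k + z) + b = tF a b c (k + 1) + a * z := by
        rw [tF_succ]; ring
      rw [heq]
      exact add_mem h1 h2
  · intro x hx S hS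
    obtain ⟨⟨h0, hadd, htheta⟩, hcS⟩ := hS
    have htk : ∀ k, tF a b c k ∈ S := by
      intro k
      induction k with
      | zero => simpa [tF_zero] using hcS
      | succ k ih =>
        rw [tF_succ]
        exact htheta _ ih (tF_pos a b c ha hc k).ne'
    let S' : AddSubmonoid ℕ := ⟨⟨S, fun {x y} hx hy => hadd x hx y hy⟩, h0⟩
    have : Hmon a b c ≤ S' := AddSubmonoid.closure_le.mpr
      (fun x hx => by obtain ⟨k, rfl⟩ := hx; exact htk k)
    exact this hx
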